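/- Let T > 0, n_c ≥ 1 an integer, α_max ∈ (0,1), a = α_max/(T(1 − α_max)), and M > 0. If M < min{ a / (Σ_{k=0}^{n_c−1} α_max^k), 1 / (T · Σ_{k=1}^{n_c−1} k·α_max^{k−1}) }, then the scalar fixed point equation x = M · Σ_{k=0}^{n_c−1} (Tx/(1+Tx))^k has a unique solution in [0,a]. -/

import Mathlib

open Finset

private lemma pow_sub_pow_abs_le {p q c : ℝ} (hp : 0 ≤ p) (hq : 0 ≤ q)
    (hpc : p ≤ c) (hqc : q ≤ c) (k : ℕ) :
    |p ^ k - q ^ k| ≤ k * c ^ (k - 1) * |p - q| := by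
  rcases Nat.eq_zero_or_pos k with hk | hk
  · simp [hk]
  have key : p ^ k - q ^ k = (∑ i ∈ range k, p ^ i * q ^ (k - 1 - i)) * (p - q) :=
    (geom_sum₂_mul p q k).symm
  rw [key, abs_mul]
  gcongr ?_ * _
  have hc : 0 ≤ c := le_trans hp hpc
  calc |∑ i ∈ range k, p ^ i * q ^ (k - 1 - i)|
      ≤ ∑ i ∈ range k, |p ^ i * q ^ (k - 1 - i)| := abs_sum_le_sum_abs _ _
    _ ≤ ∑ i ∈ range k, c ^ (k - 1) := by
        apply Finset.sum_le_sum
        intro i hi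
        have hik := Finset.mem_range.mp hi
        rw [abs_mul, abs_pow, abs_pow, abs_of_nonneg hp, abs_of_nonneg hq]
        calc p ^ i * q ^ (k-1-i) ≤ c ^ i * c ^ (k-1-i) := by gcongr
          _ = c ^ (k-1) := by rw [← pow_add]; congr 1; omega
    _ = k * c ^ (k - 1) := by simp [mul_comm]


/-- Uniqueness of the scalar fixed point. With
`a = α_max/(T(1−α_max))`, if `0 < M < min{ a/∑_{k<n_c} α_max^k ,
1/(T ∑_{k<n_c} k α_max^{k−1}) }`, then `x = M · ∑_{k<n_c} (Tx/(1+Tx))^k`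
has a unique solution in `[0,a]`. -/
theorem stmt9 (T : ℝ) (hT : 0 < T) (nc : ℕ) (hnc : 1 ≤ nc)
    (αmax : ℝ) (hαmax : αmax ∈ Set.Ioo (0 : ℝ) 1)
    (a : ℝ) (ha : a = αmax / (T * (1 - αmax)))
    (M : ℝ) (hM : 0 < M)
    (hMlt : M < min (a / ∑ k ∈ Finset.range nc, αmax ^ k)
      (1 / (T * ∑ k ∈ Finset.range nc, (k : ℝ) * αmax ^ (k - 1)))) :
    ∃! x : ℝ, x ∈ Set.Icc (0 : ℝ) a ∧
      x = M * ∑ k ∈ Finset.range nc, (T * x / (1 + T * x)) ^ k := by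
  obtain ⟨hα0, hα1⟩ := hαmax
  set S : ℝ := ∑ k ∈ Finset.range nc, αmax ^ k with hS
  set D : ℝ := ∑ k ∈ Finset.range nc, (k : ℝ) * αmax ^ (k - 1) with hD
  have hSpos : 0 < S := by
    apply Finset.sum_pos
    · intro k _; positivity
    · exact ⟨0, Finset.mem_range.mpr hnc⟩
  have hDnn : 0 ≤ D := by
    apply Finset.sum_nonneg; intro k _
    exact mul_nonneg (Nat.cast_nonneg k) (pow_nonneg hα0.le _)
  have ha0 : 0 < a := by
    rw [ha]; exact div_pos hα0 (mul_pos hT (by linarith))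
  -- from hMlt
  have hMS : M * S < a := by
    have := lt_of_lt_of_le hMlt (min_le_left _ _)
    exact (lt_div_iff₀ hSpos).mp this
  have hMTD : M * (T * D) < 1 := by
    have h2 := lt_of_lt_of_le hMlt (min_le_right _ _)
    rcases eq_or_lt_of_le hDnn with hD0 | hDpos
    · rw [← hD0] at h2; simp at h2; linarith
    · have hTD : 0 < T * D := by positivity
      exact (lt_div_iff₀ hTD).mp h2
  -- facts about α(x) = Tx/(1+Tx)
  have hden : ∀ x : ℝ, 0 ≤ x → (0:ℝ) < 1 + T * x := by
    intro x hx; nlinarith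
  have halow : ∀ x : ℝ, 0 ≤ x → 0 ≤ T * x / (1 + T * x) := by
    intro x hx
    apply div_nonneg (by positivity) (hden x hx).le
  have hne : (1 : ℝ) - αmax ≠ 0 := by linarith
  have hTa : T * a * (1 - αmax) = αmax := by
    rw [ha]; field_simp
  have haup : ∀ x : ℝ, x ∈ Set.Icc (0:ℝ) a → T * x / (1 + T * x) ≤ αmax := by
    intro x ⟨hx0, hxa⟩
    rw [div_le_iff₀ (hden x hx0)]
    nlinarith [mul_le_mul_of_nonneg_left hxa hT.le]
  have haa : T * a / (1 + T * a) = αmax := by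
    have hd := hden a ha0.le
    rw [div_eq_iff hd.ne']
    nlinarith
  set f : ℝ → ℝ := fun x => M * ∑ k ∈ Finset.range nc, (T * x / (1 + T * x)) ^ k with hf
  -- continuity
  have hcont : ContinuousOn f (Set.Icc 0 a) := by
    apply ContinuousOn.mul continuousOn_const
    apply continuousOn_finset_sum
    intro k _
    apply ContinuousOn.pow
    apply ContinuousOn.div (by fun_prop) (by fun_prop)
    intro x hx
    exact (hden x hx.1).ne'
  -- values at endpoints
  have hf0 : f 0 = M := by
    simp only [hf, mul_zero, zero_div]
    rw [Finset.sum_eq_single 0]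
    · simp
    · intro b _ hb; rw [zero_pow hb]
    · intro h; exact absurd (Finset.mem_range.mpr hnc) h
  have hfa : f a = M * S := by
    simp only [hf, haa, hS]
  -- existence via IVT
  have hIVT := intermediate_value_Icc' ha0.le (hcont.sub continuousOn_id)
  have h0mem : (0:ℝ) ∈ Set.Icc (f a - a) (f 0 - 0) := by
    constructor <;> simp only [hf0, hfa] <;> linarith
  obtain ⟨x, hxmem, hxeq⟩ := hIVT h0mem
  have hxfix : x = f x := by
    have hxeq : f x - x = 0 := hxeq
    linarith
  refine ⟨x, ⟨hxmem, hxfix⟩, ?_⟩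
  -- uniqueness
  rintro y ⟨hymem, hyfix⟩
  -- show y = x using Lipschitz estimate
  have key : ∀ u v : ℝ, u ∈ Set.Icc (0:ℝ) a → v ∈ Set.Icc (0:ℝ) a →
      |f u - f v| ≤ M * (T * D) * |u - v| := by
    intro u v hu hv
    set p := T * u / (1 + T * u) with hp
    set q := T * v / (1 + T * v) with hq
    have hpq : |p - q| ≤ T * |u - v| := by
      have hdu := hden u hu.1
      have hdv := hden v hv.1
      have hid : p - q = T * (u - v) / ((1 + T * u) * (1 + T * v)) := by
        rw [hp, hq]; field_simp; ring
      rw [hid, abs_div, abs_mul]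
      have h1 : (1:ℝ) ≤ |(1 + T * u) * (1 + T * v)| := by
        rw [abs_of_pos (by positivity)]
        nlinarith [hu.1, hv.1, hT.le, mul_nonneg hT.le hu.1, mul_nonneg hT.le hv.1,
          mul_nonneg (mul_nonneg hT.le hu.1) (mul_nonneg hT.le hv.1)]
      calc |T| * |u - v| / |(1 + T * u) * (1 + T * v)|
          ≤ |T| * |u - v| / 1 := by
            apply div_le_div_of_nonneg_left ?_ ?_ h1 <;> positivity
        _ = T * |u - v| := by rw [div_one, abs_of_pos hT]
    have hsum : |∑ k ∈ Finset.range nc, p ^ k - ∑ k ∈ Finset.range nc, q ^ k|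
        ≤ D * |p - q| := by
      rw [← Finset.sum_sub_distrib]
      calc |∑ k ∈ Finset.range nc, (p ^ k - q ^ k)|
          ≤ ∑ k ∈ Finset.range nc, |p ^ k - q ^ k| := abs_sum_le_sum_abs _ _
        _ ≤ ∑ k ∈ Finset.range nc, (k : ℝ) * αmax ^ (k - 1) * |p - q| := by
            apply Finset.sum_le_sum
            intro k _
            exact pow_sub_pow_abs_le (halow u hu.1) (halow v hv.1)
              (haup u hu) (haup v hv) k
        _ = D * |p - q| := by rw [← Finset.sum_mul]
    have : |f u - f v| = M * |∑ k ∈ Finset.range nc, p ^ k - ∑ k ∈ Finset.range nc, q ^ k| := by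
      rw [hf]; simp only []
      rw [← mul_sub, abs_mul, abs_of_pos hM]
    rw [this]
    calc M * |∑ k ∈ Finset.range nc, p ^ k - ∑ k ∈ Finset.range nc, q ^ k|
        ≤ M * (D * |p - q|) := by
          exact mul_le_mul_of_nonneg_left hsum hM.le
      _ ≤ M * (D * (T * |u - v|)) := by
          apply mul_le_mul_of_nonneg_left ?_ hM.le
          exact mul_le_mul_of_nonneg_left hpq hDnn
      _ = M * (T * D) * |u - v| := by ring
  have hest := key y x hymem hxmem
  rw [show f y = y from hyfix.symm, show f x = x from hxfix.symm] at hest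
  by_contra hne
  have habs : 0 < |y - x| := abs_pos.mpr (sub_ne_zero.mpr hne)
  nlinarith
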